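/- Let 0 < ν ≤ 1 and let m be the multiplier defined in the context. There is an absolute constant C (independent of ν, t, k, η, η', l, l') such that for all t ≥ 0, all k ∈ ℤ \ {0}, and all η, η', l, l' ∈ ℝ: | m(t,k,η,l)/m(t,k,η',l') − 1 | ≤ C · |(η−η', l−l')|/|k| · ⟨(η−η', l−l')/k⟩, where ⟨x⟩ = (1+|x|²)^{1/2}. Equivalently, |m(t,k,η,l) − m(t,k,η',l')| · |k| ≤ C m(t,k,η',l') |(η−η', l−l')| ⟨(η−η', l−l')⟩ whenever |k| ≥ 1. -/

import Mathlib

/-- Clamp to `[-R, 0]`. -/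
noncomputable def mCl (R x : ℝ) : ℝ := max (min x 0) (-R)

lemma mCl_of_le {R x : ℝ} (h : x ≤ -R) : mCl R x = -R := by
  have h' : min x 0 ≤ -R := le_trans (min_le_left x 0) h
  simp [mCl, max_eq_right h']

lemma mCl_of_mem {R x : ℝ} (h1 : -R ≤ x) (h2 : x ≤ 0) : mCl R x = x := by
  rw [mCl, min_eq_left h2, max_eq_left h1]

lemma mCl_of_nonneg {R x : ℝ} (hR : 0 ≤ R) (h : 0 ≤ x) : mCl R x = 0 := by
  rw [mCl, min_eq_right h, max_eq_left (neg_nonpos.mpr hR)]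

lemma mCl_nonpos {R x : ℝ} (hR : 0 ≤ R) : mCl R x ≤ 0 :=
  max_le (min_le_right x 0) (neg_nonpos.mpr hR)

lemma mCl_mono {R x y : ℝ} (h : x ≤ y) : mCl R x ≤ mCl R y :=
  max_le_max (min_le_min h le_rfl) le_rfl

lemma mCl_lip {R x y : ℝ} : |mCl R x - mCl R y| ≤ |x - y| := by
  refine le_trans (abs_max_sub_max_le_abs _ _ _) ?_
  refine le_trans (abs_min_sub_min_le_max x 0 y 0) ?_
  simp

lemma abs_le_of_sq {x δ : ℝ} (hδ : 0 ≤ δ) (h : x ^ 2 ≤ δ ^ 2) : |x| ≤ δ := by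
  rw [abs_le]
  constructor <;> nlinarith [sq_nonneg (x - δ), sq_nonneg (x + δ)]

lemma sq_close {x y δ : ℝ} (h : |x - y| ≤ δ) (hδ1 : δ ≤ 1) :
    |x ^ 2 - y ^ 2| ≤ (4 + 2 * y ^ 2) * δ := by
  have h0 : 0 ≤ δ := (abs_nonneg _).trans h
  have hsq : (x - y) ^ 2 ≤ δ ^ 2 := by
    nlinarith [sq_abs (x - y), mul_le_mul h h (abs_nonneg (x - y)) h0]
  have hy : y * (x - y) ≤ |y| * δ := by
    calc y * (x - y) ≤ |y * (x - y)| := le_abs_self _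
      _ = |y| * |x - y| := abs_mul _ _
      _ ≤ |y| * δ := mul_le_mul_of_nonneg_left h (abs_nonneg _)
  have hy' : -(|y| * δ) ≤ y * (x - y) := by
    have : |y * (x - y)| ≤ |y| * δ := by
      rw [abs_mul]; exact mul_le_mul_of_nonneg_left h (abs_nonneg _)
    have := neg_abs_le (y * (x - y))
    linarith
  have h2y : 2 * |y| ≤ 1 + y ^ 2 := by nlinarith [sq_nonneg (|y| - 1), sq_abs y]
  rw [abs_le]
  constructor
  · nlinarith [sq_nonneg (x - y), mul_nonneg h0 (abs_nonneg y)]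
  · nlinarith [mul_nonneg h0 (abs_nonneg y)]

lemma key_small {A B A' B' δ : ℝ} (hδ0 : 0 ≤ δ) (hδ1 : δ ≤ 1)
    (hA'1 : 1 ≤ A') (hB1 : 1 ≤ B) (hB'0 : 0 ≤ B')
    (eA : |A - A'| ≤ 8 * δ * A') (eB : |B' - B| ≤ 8 * δ * B) :
    |A * B' - A' * B| ≤ 80 * δ * (1 + δ) * (A' * B) := by
  have eA1 : A - A' ≤ 8 * δ * A' := le_trans (le_abs_self _) eA
  have eA2 : A' - A ≤ 8 * δ * A' := by
    have := neg_abs_le (A - A'); linarith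
  have eB1 : B' - B ≤ 8 * δ * B := le_trans (le_abs_self _) eB
  have eB2 : B - B' ≤ 8 * δ * B := by
    have := neg_abs_le (B' - B); linarith
  have hB'9 : B' ≤ 9 * B := by nlinarith
  rw [abs_le]
  constructor
  · -- A' * B - A * B' ≤ ...
    nlinarith [mul_le_mul_of_nonneg_right eA2 hB'0,
      mul_le_mul_of_nonneg_left eB2 (by linarith : (0:ℝ) ≤ A'),
      mul_nonneg (mul_nonneg hδ0 (by linarith : (0:ℝ) ≤ A')) (by linarith : (0:ℝ) ≤ 9 * B - B'),
      mul_nonneg (mul_nonneg (mul_nonneg hδ0 hδ0) (by linarith : (0:ℝ) ≤ A')) (by linarith : (0:ℝ) ≤ B)]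
  · nlinarith [mul_le_mul_of_nonneg_right eA1 hB'0,
      mul_le_mul_of_nonneg_left eB1 (by linarith : (0:ℝ) ≤ A'),
      mul_nonneg (mul_nonneg hδ0 (by linarith : (0:ℝ) ≤ A')) (by linarith : (0:ℝ) ≤ 9 * B - B'),
      mul_nonneg (mul_nonneg (mul_nonneg hδ0 hδ0) (by linarith : (0:ℝ) ≤ A')) (by linarith : (0:ℝ) ≤ B)]

lemma key_big {A B A' B' a2 c2 e2 δ : ℝ}
    (ha20 : 0 ≤ a2) (hc20 : 0 ≤ c2) (he20 : 0 ≤ e2)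
    (hA0 : 0 ≤ A) (hB'0 : 0 ≤ B') (hA'1 : 1 ≤ A') (hB1 : 1 ≤ B) (hδ1 : 1 ≤ δ)
    (hA2 : A ≤ 2 * A' + 2 * a2) (hB2 : B' ≤ 2 * B + 2 * c2 + 2 * e2)
    (ha2δ : a2 ≤ δ ^ 2) (hc2δ : c2 ≤ δ ^ 2) (he2δ : e2 ≤ δ ^ 2)
    (ha28 : a2 ≤ 8 * (A' * B)) (he24 : e2 ≤ 4 * (A' * B)) :
    |A * B' - A' * B| ≤ 80 * δ * (1 + δ) * (A' * B) := by
  have hA'0 : (0:ℝ) ≤ A' := by linarith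
  have hB0 : (0:ℝ) ≤ B := by linarith
  have hAB1 : (1:ℝ) ≤ A' * B := by nlinarith
  have q1 : a2 * c2 ≤ (8 * (A' * B)) * δ ^ 2 :=
    mul_le_mul ha28 hc2δ hc20 (by positivity)
  have q2 : a2 * e2 ≤ δ ^ 2 * (4 * (A' * B)) :=
    mul_le_mul ha2δ he24 he20 (sq_nonneg δ)
  have q3 : A * B' ≤ (2 * A' + 2 * a2) * (2 * B + 2 * c2 + 2 * e2) :=
    mul_le_mul hA2 hB2 hB'0 (by linarith)
  have q4 : A' * c2 ≤ A' * δ ^ 2 := mul_le_mul_of_nonneg_left hc2δ hA'0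
  have q4' : A' * e2 ≤ A' * δ ^ 2 := mul_le_mul_of_nonneg_left he2δ hA'0
  have q5 : a2 * B ≤ δ ^ 2 * B := mul_le_mul_of_nonneg_right ha2δ hB0
  have q6 : A' * δ ^ 2 ≤ δ ^ 2 * (A' * B) := by
    nlinarith [mul_nonneg (mul_nonneg (sq_nonneg δ) hA'0) (sub_nonneg.2 hB1)]
  have q7 : δ ^ 2 * B ≤ δ ^ 2 * (A' * B) := by
    nlinarith [mul_nonneg (mul_nonneg (sq_nonneg δ) hB0) (sub_nonneg.2 hA'1)]
  have q8 : δ * (A' * B) ≤ δ ^ 2 * (A' * B) := by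
    nlinarith [mul_nonneg (mul_nonneg (mul_nonneg (by linarith : (0:ℝ) ≤ δ) hA'0) hB0) (sub_nonneg.2 hδ1)]
  rw [abs_le]
  constructor
  · -- lower bound : A' * B - A * B' ≤ ..., trivial since A*B' ≥ 0
    nlinarith [mul_nonneg hA0 hB'0]
  · nlinarith

set_option maxHeartbeats 1600000 in
/-- Core algebraic estimate. -/
lemma mCore (u v u' v' w w' δ : ℝ) (hδ0 : 0 ≤ δ)
    (huv : u ^ 2 ≤ v ^ 2) (huv' : u' ^ 2 ≤ v' ^ 2)
    (ha : (u - u') ^ 2 + (w - w') ^ 2 ≤ δ ^ 2)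
    (hb : (v - v') ^ 2 + (w - w') ^ 2 ≤ δ ^ 2) :
    |((1 + u ^ 2 + w ^ 2) / (1 + v ^ 2 + w ^ 2)) /
        ((1 + u' ^ 2 + w' ^ 2) / (1 + v' ^ 2 + w' ^ 2)) - 1| ≤ 80 * δ * (1 + δ) := by
  have hApos : (0:ℝ) < 1 + u ^ 2 + w ^ 2 := by positivity
  have hBpos : (0:ℝ) < 1 + v ^ 2 + w ^ 2 := by positivity
  have hA'pos : (0:ℝ) < 1 + u' ^ 2 + w' ^ 2 := by positivity
  have hB'pos : (0:ℝ) < 1 + v' ^ 2 + w' ^ 2 := by positivity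
  have hrw : ((1 + u ^ 2 + w ^ 2) / (1 + v ^ 2 + w ^ 2)) /
        ((1 + u' ^ 2 + w' ^ 2) / (1 + v' ^ 2 + w' ^ 2)) - 1 =
      ((1 + u ^ 2 + w ^ 2) * (1 + v' ^ 2 + w' ^ 2)
        - (1 + u' ^ 2 + w' ^ 2) * (1 + v ^ 2 + w ^ 2)) /
      ((1 + u' ^ 2 + w' ^ 2) * (1 + v ^ 2 + w ^ 2)) := by
    field_simp
  have hden : (0:ℝ) < (1 + u' ^ 2 + w' ^ 2) * (1 + v ^ 2 + w ^ 2) := by positivity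
  rw [hrw, abs_div, abs_of_pos hden, div_le_iff₀ hden]
  clear hrw
  rcases le_total δ 1 with hδ1 | hδ1
  · -- small δ : Lipschitz estimate
    have hau : |u - u'| ≤ δ := abs_le_of_sq hδ0 (by nlinarith [sq_nonneg (w - w')])
    have hav' : |v' - v| ≤ δ := by
      rw [abs_sub_comm]; exact abs_le_of_sq hδ0 (by nlinarith [sq_nonneg (w - w')])
    have haw : |w - w'| ≤ δ := abs_le_of_sq hδ0 (by nlinarith [sq_nonneg (u - u')])
    have haw' : |w' - w| ≤ δ := by rwa [abs_sub_comm]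
    have hu2 := sq_close hau hδ1
    have hw2 := sq_close haw hδ1
    have hv2 := sq_close hav' hδ1
    have hw2' := sq_close haw' hδ1
    have eA : |(1 + u ^ 2 + w ^ 2) - (1 + u' ^ 2 + w' ^ 2)| ≤ 8 * δ * (1 + u' ^ 2 + w' ^ 2) := by
      have h1 : |(1 + u ^ 2 + w ^ 2) - (1 + u' ^ 2 + w' ^ 2)|
          ≤ |u ^ 2 - u' ^ 2| + |w ^ 2 - w' ^ 2| := by
        have h2 : (1 + u ^ 2 + w ^ 2) - (1 + u' ^ 2 + w' ^ 2)
            = (u ^ 2 - u' ^ 2) + (w ^ 2 - w' ^ 2) := by ring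
        rw [h2]; exact abs_add_le _ _
      linarith [h1, hu2, hw2, mul_nonneg hδ0 (sq_nonneg u'), mul_nonneg hδ0 (sq_nonneg w')]
    have eB : |(1 + v' ^ 2 + w' ^ 2) - (1 + v ^ 2 + w ^ 2)| ≤ 8 * δ * (1 + v ^ 2 + w ^ 2) := by
      have h1 : |(1 + v' ^ 2 + w' ^ 2) - (1 + v ^ 2 + w ^ 2)|
          ≤ |v' ^ 2 - v ^ 2| + |w' ^ 2 - w ^ 2| := by
        have h2 : (1 + v' ^ 2 + w' ^ 2) - (1 + v ^ 2 + w ^ 2)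
            = (v' ^ 2 - v ^ 2) + (w' ^ 2 - w ^ 2) := by ring
        rw [h2]; exact abs_add_le _ _
      linarith [h1, hv2, hw2', mul_nonneg hδ0 (sq_nonneg v), mul_nonneg hδ0 (sq_nonneg w)]
    exact key_small hδ0 hδ1 (by nlinarith [sq_nonneg u', sq_nonneg w'])
      (by nlinarith [sq_nonneg v, sq_nonneg w]) hB'pos.le eA eB
  · -- large δ : ratio estimate
    refine key_big (a2 := (u - u') ^ 2 + (w - w') ^ 2) (c2 := (v - v') ^ 2)
      (e2 := (w - w') ^ 2) (by positivity) (sq_nonneg (v - v')) (sq_nonneg (w - w'))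
      hApos.le hB'pos.le (by linarith [sq_nonneg u', sq_nonneg w'])
      (by linarith [sq_nonneg v, sq_nonneg w]) hδ1 ?_ ?_ ha
      (by linarith [hb, sq_nonneg (w - w')]) (by linarith [ha, sq_nonneg (u - u')]) ?_ ?_
    · nlinarith [sq_nonneg (u - 2 * u'), sq_nonneg (w - 2 * w')]
    · nlinarith [sq_nonneg (v' - 2 * v), sq_nonneg (w' - 2 * w)]
    · -- a2 ≤ 8 * (A' * B)
      nlinarith [sq_nonneg (u + u'), sq_nonneg (w + w'),
        mul_nonneg (by linarith [sq_nonneg u', sq_nonneg w'] : (0:ℝ) ≤ u' ^ 2 + w' ^ 2)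
          (by linarith [sq_nonneg v, sq_nonneg w] : (0:ℝ) ≤ v ^ 2 + w ^ 2), huv]
    · -- e2 ≤ 4 * (A' * B)
      nlinarith [sq_nonneg (w + w'),
        mul_nonneg (by linarith [sq_nonneg u', sq_nonneg w'] : (0:ℝ) ≤ u' ^ 2 + w' ^ 2)
          (by linarith [sq_nonneg v, sq_nonneg w] : (0:ℝ) ≤ v ^ 2 + w ^ 2)]

/-- The Fourier multiplier `m` from Definition 3.2 of the paper. -/
noncomputable def mMul (ν t : ℝ) (k : ℤ) (η l : ℝ) : ℝ :=
  if k = 0 then 1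
  else if η / (k : ℝ) ≤ -1000 * ν ^ (-(1 : ℝ) / 3) then 1
  else if η / (k : ℝ) ≤ 0 then
    (if t < η / (k : ℝ) + 1000 * ν ^ (-(1 : ℝ) / 3) then
        ((k : ℝ) ^ 2 + η ^ 2 + l ^ 2) / ((k : ℝ) ^ 2 + (η - (k : ℝ) * t) ^ 2 + l ^ 2)
      else
        ((k : ℝ) ^ 2 + η ^ 2 + l ^ 2) /
          ((k : ℝ) ^ 2 + (1000 * (k : ℝ) * ν ^ (-(1 : ℝ) / 3)) ^ 2 + l ^ 2))
  else
    (if t < η / (k : ℝ) then 1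
     else if t < η / (k : ℝ) + 1000 * ν ^ (-(1 : ℝ) / 3) then
        ((k : ℝ) ^ 2 + l ^ 2) / ((k : ℝ) ^ 2 + (η - (k : ℝ) * t) ^ 2 + l ^ 2)
     else
        ((k : ℝ) ^ 2 + l ^ 2) /
          ((k : ℝ) ^ 2 + (1000 * (k : ℝ) * ν ^ (-(1 : ℝ) / 3)) ^ 2 + l ^ 2))

lemma mMul_eq {ν : ℝ} (hν : 0 < ν) {t : ℝ} (ht : 0 ≤ t) {k : ℤ} (hk : k ≠ 0) (η l : ℝ) :
    mMul ν t k η l =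
      (1 + (mCl (1000 * ν ^ (-(1 : ℝ) / 3)) (η / (k : ℝ))) ^ 2 + (l / (k : ℝ)) ^ 2) /
      (1 + (mCl (1000 * ν ^ (-(1 : ℝ) / 3)) (η / (k : ℝ) - t)) ^ 2 + (l / (k : ℝ)) ^ 2) := by
  have hk' : (k : ℝ) ≠ 0 := Int.cast_ne_zero.mpr hk
  have hk2 : (0:ℝ) < (k : ℝ) ^ 2 := by
    rw [← sq_abs]; exact pow_pos (abs_pos.mpr hk') 2
  have hR0 : (0:ℝ) < 1000 * ν ^ (-(1 : ℝ) / 3) := by positivity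
  unfold mMul
  rw [if_neg hk]
  split_ifs with h1 h2 h3 h4 h5
  · -- η/k ≤ -R
    have e1 : η / (k:ℝ) ≤ -(1000 * ν ^ (-(1 : ℝ) / 3)) := by linarith
    rw [mCl_of_le e1, mCl_of_le (by linarith : η / (k:ℝ) - t ≤ -(1000 * ν ^ (-(1 : ℝ) / 3)))]
    rw [eq_comm, div_self]
    positivity
  · -- -R < η/k ≤ 0, t < η/k + R
    push_neg at h1
    rw [mCl_of_mem (by linarith) h2, mCl_of_mem (by linarith) (by linarith)]
    rw [div_eq_div_iff (by nlinarith [sq_nonneg (η - (k:ℝ)*t), sq_nonneg l]) (by positivity)]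
    field_simp
  · -- -R < η/k ≤ 0, t ≥ η/k + R
    push_neg at h1 h3
    rw [mCl_of_mem (by linarith) h2, mCl_of_le (by linarith : η / (k:ℝ) - t ≤ -(1000 * ν ^ (-(1 : ℝ) / 3)))]
    rw [div_eq_div_iff (by nlinarith [sq_nonneg (1000 * (k:ℝ) * ν ^ (-(1 : ℝ) / 3)), sq_nonneg l]) (by positivity)]
    field_simp
  · -- η/k > 0, t < η/k
    push_neg at h1 h2
    rw [mCl_of_nonneg hR0.le h2.le, mCl_of_nonneg hR0.le (by linarith : (0:ℝ) ≤ η / (k:ℝ) - t)]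
    rw [eq_comm, div_self]
    positivity
  · -- η/k > 0, η/k ≤ t < η/k + R
    push_neg at h1 h2 h4
    rw [mCl_of_nonneg hR0.le h2.le, mCl_of_mem (by linarith) (by linarith)]
    rw [div_eq_div_iff (by nlinarith [sq_nonneg (η - (k:ℝ)*t), sq_nonneg l]) (by positivity)]
    field_simp
    ring
  · -- η/k > 0, t ≥ η/k + R
    push_neg at h1 h2 h4 h5
    rw [mCl_of_nonneg hR0.le h2.le, mCl_of_le (by linarith : η / (k:ℝ) - t ≤ -(1000 * ν ^ (-(1 : ℝ) / 3)))]
    rw [div_eq_div_iff (by nlinarith [sq_nonneg (1000 * (k:ℝ) * ν ^ (-(1 : ℝ) / 3)), sq_nonneg l]) (by positivity)]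
    field_simp
    ring

lemma sq_le_of_abs_le {a b : ℝ} (h : |a| ≤ |b|) : a ^ 2 ≤ b ^ 2 := by
  rw [← sq_abs a, ← sq_abs b]; exact pow_le_pow_left₀ (abs_nonneg a) h 2


/-- Commutator estimate for the multiplier `m` (Proposition 3.3, estimate (A.1)):
the ratio `m(t,k,η,l)/m(t,k,η',l')` is close to `1` up to
`C |(η-η',l-l')|/|k| · ⟨(η-η',l-l')/k⟩`, uniformly in `ν ∈ (0,1]`, `t ≥ 0`, `k ≠ 0`. -/
lemma one_add_le_two_sqrt {x : ℝ} (hx : 0 ≤ x) : 1 + x ≤ 2 * Real.sqrt (1 + x ^ 2) := by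
  nlinarith [Real.sq_sqrt (by positivity : (0:ℝ) ≤ 1 + x ^ 2),
    Real.sqrt_nonneg (1 + x ^ 2), sq_nonneg (x - 1),
    sq_nonneg (1 + x - 2 * Real.sqrt (1 + x ^ 2))]

lemma bound_small {δ : ℝ} (hδ0 : 0 ≤ δ) :
    80 * δ * (1 + δ) ≤ 160 * δ * Real.sqrt (1 + δ ^ 2) := by
  nlinarith [one_add_le_two_sqrt hδ0, Real.sqrt_nonneg (1 + δ ^ 2),
    mul_nonneg hδ0 hδ0]

lemma one_add_sqrt_le {S : ℝ} (hS : 0 ≤ S) :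
    1 + Real.sqrt S ≤ 2 * Real.sqrt (1 + S) := by
  nlinarith [Real.sq_sqrt hS, Real.sqrt_nonneg S,
    Real.sq_sqrt (by linarith : (0:ℝ) ≤ 1 + S), Real.sqrt_nonneg (1 + S),
    sq_nonneg (Real.sqrt S - 1), sq_nonneg (1 + Real.sqrt S - 2 * Real.sqrt (1 + S))]

set_option maxHeartbeats 2000000 in
theorem mMul_commutator_estimate :
    ∃ C > (0 : ℝ), ∀ ν : ℝ, 0 < ν → ν ≤ 1 → ∀ t : ℝ, 0 ≤ t → ∀ k : ℤ, k ≠ 0 →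
      ∀ η η' l l' : ℝ,
        |mMul ν t k η l / mMul ν t k η' l' - 1| ≤
          C * (Real.sqrt ((η - η') ^ 2 + (l - l') ^ 2) / |(k : ℝ)|) *
            Real.sqrt (1 + ((η - η') ^ 2 + (l - l') ^ 2) / (k : ℝ) ^ 2) ∧
        |mMul ν t k η l - mMul ν t k η' l'| * |(k : ℝ)| ≤
          C * mMul ν t k η' l' * Real.sqrt ((η - η') ^ 2 + (l - l') ^ 2) *
            Real.sqrt (1 + ((η - η') ^ 2 + (l - l') ^ 2)) := by
  refine ⟨160, by norm_num, ?_⟩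
  intro ν hν hν1 t ht k hk η η' l l'
  have hk' : (k : ℝ) ≠ 0 := Int.cast_ne_zero.mpr hk
  have hk1 : (1 : ℝ) ≤ |(k : ℝ)| := by
    have h := Int.one_le_abs hk
    calc (1:ℝ) = ((1:ℤ):ℝ) := by norm_num
      _ ≤ ((|k| : ℤ) : ℝ) := by exact_mod_cast h
      _ = |(k:ℝ)| := by push_cast; ring
  have hk2 : (0:ℝ) < (k : ℝ) ^ 2 := by
    rw [← sq_abs]; exact pow_pos (lt_of_lt_of_le one_pos hk1) 2
  set R := 1000 * ν ^ (-(1 : ℝ) / 3) with hRdef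
  have hR0 : 0 < R := by rw [hRdef]; positivity
  rw [mMul_eq hν ht hk η l, mMul_eq hν ht hk η' l', ← hRdef]
  set S := (η - η') ^ 2 + (l - l') ^ 2 with hSdef
  have hS0 : (0:ℝ) ≤ S := by rw [hSdef]; positivity
  set u := mCl R (η / (k:ℝ)) with hu
  set u' := mCl R (η' / (k:ℝ)) with hu'
  set v := mCl R (η / (k:ℝ) - t) with hv
  set v' := mCl R (η' / (k:ℝ) - t) with hv'
  set w := l / (k:ℝ) with hw
  set w' := l' / (k:ℝ) with hw'
  set δ := Real.sqrt (S / (k:ℝ) ^ 2) with hδdef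
  clear_value R S u u' v v' w w' δ
  have hδ0 : 0 ≤ δ := hδdef ▸ Real.sqrt_nonneg _
  have hδ2 : δ ^ 2 = S / (k:ℝ) ^ 2 := by
    rw [hδdef]; exact Real.sq_sqrt (by positivity)
  have hkey : (η / (k:ℝ) - η' / (k:ℝ)) ^ 2 + (w - w') ^ 2 = δ ^ 2 := by
    rw [hδ2, hSdef, hw, hw']
    field_simp
  have hu0 : u ≤ 0 := by rw [hu]; exact mCl_nonpos hR0.le
  have hu0' : u' ≤ 0 := by rw [hu']; exact mCl_nonpos hR0.le
  have hvu : v ≤ u := by rw [hu, hv]; exact mCl_mono (by linarith)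
  have hvu' : v' ≤ u' := by rw [hu', hv']; exact mCl_mono (by linarith)
  have huv : u ^ 2 ≤ v ^ 2 := by nlinarith
  have huv' : u' ^ 2 ≤ v' ^ 2 := by nlinarith
  have ha : (u - u') ^ 2 + (w - w') ^ 2 ≤ δ ^ 2 := by
    rw [← hkey]
    have h1 : (u - u') ^ 2 ≤ (η / (k:ℝ) - η' / (k:ℝ)) ^ 2 := by
      rw [hu, hu']; exact sq_le_of_abs_le mCl_lip
    linarith
  have hb : (v - v') ^ 2 + (w - w') ^ 2 ≤ δ ^ 2 := by
    rw [← hkey]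
    have h1 : (v - v') ^ 2 ≤ (η / (k:ℝ) - η' / (k:ℝ)) ^ 2 := by
      have h2 : (v - v') ^ 2 ≤ ((η / (k:ℝ) - t) - (η' / (k:ℝ) - t)) ^ 2 := by
        rw [hv, hv']; exact sq_le_of_abs_le mCl_lip
      have h3 : ((η / (k:ℝ) - t) - (η' / (k:ℝ) - t)) ^ 2 = (η / (k:ℝ) - η' / (k:ℝ)) ^ 2 := by ring
      linarith [h3 ▸ h2]
    linarith
  have hcore := mCore u v u' v' w w' δ hδ0 huv huv' ha hb
  have hm' : (0:ℝ) < (1 + u' ^ 2 + w' ^ 2) / (1 + v' ^ 2 + w' ^ 2) := by positivity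
  have hδeq : δ = Real.sqrt S / |(k:ℝ)| := by
    rw [hδdef, Real.sqrt_div hS0, Real.sqrt_sq_eq_abs]
  have hq : Real.sqrt (1 + δ ^ 2) = Real.sqrt (1 + S / (k:ℝ) ^ 2) := by rw [hδ2]
  have h1δ : 1 + δ ≤ 2 * Real.sqrt (1 + δ ^ 2) := one_add_le_two_sqrt hδ0
  constructor
  · calc |(1 + u ^ 2 + w ^ 2) / (1 + v ^ 2 + w ^ 2) /
        ((1 + u' ^ 2 + w' ^ 2) / (1 + v' ^ 2 + w' ^ 2)) - 1| ≤ 80 * δ * (1 + δ) := hcore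
      _ ≤ 160 * δ * Real.sqrt (1 + δ ^ 2) := bound_small hδ0
      _ = 160 * (Real.sqrt S / |(k:ℝ)|) * Real.sqrt (1 + S / (k:ℝ) ^ 2) := by
        rw [← hδeq, ← hq]
  · have hd : |(1 + u ^ 2 + w ^ 2) / (1 + v ^ 2 + w ^ 2) -
        (1 + u' ^ 2 + w' ^ 2) / (1 + v' ^ 2 + w' ^ 2)| ≤
        80 * δ * (1 + δ) * ((1 + u' ^ 2 + w' ^ 2) / (1 + v' ^ 2 + w' ^ 2)) := by
      have h3 : (1 + u ^ 2 + w ^ 2) / (1 + v ^ 2 + w ^ 2) /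
          ((1 + u' ^ 2 + w' ^ 2) / (1 + v' ^ 2 + w' ^ 2)) - 1 =
          ((1 + u ^ 2 + w ^ 2) / (1 + v ^ 2 + w ^ 2) -
            (1 + u' ^ 2 + w' ^ 2) / (1 + v' ^ 2 + w' ^ 2)) /
          ((1 + u' ^ 2 + w' ^ 2) / (1 + v' ^ 2 + w' ^ 2)) := by
        field_simp
      rw [h3, abs_div, abs_of_pos hm', div_le_iff₀ hm'] at hcore
      exact hcore
    have hδS : δ * |(k:ℝ)| = Real.sqrt S := by
      rw [hδeq]
      exact div_mul_cancel₀ _ (by linarith : (0:ℝ) < |(k:ℝ)|).ne'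
    have hδle : δ ≤ Real.sqrt S := by
      rw [hδeq]; exact div_le_self (Real.sqrt_nonneg _) hk1
    have h1S : 1 + Real.sqrt S ≤ 2 * Real.sqrt (1 + S) := one_add_sqrt_le hS0
    have step : (1:ℝ) + δ ≤ 2 * Real.sqrt (1 + S) := by linarith
    calc |(1 + u ^ 2 + w ^ 2) / (1 + v ^ 2 + w ^ 2) -
          (1 + u' ^ 2 + w' ^ 2) / (1 + v' ^ 2 + w' ^ 2)| * |(k:ℝ)|
        ≤ (80 * δ * (1 + δ) * ((1 + u' ^ 2 + w' ^ 2) / (1 + v' ^ 2 + w' ^ 2))) * |(k:ℝ)| :=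
          mul_le_mul_of_nonneg_right hd (abs_nonneg _)
      _ = 80 * (δ * |(k:ℝ)|) * (1 + δ) * ((1 + u' ^ 2 + w' ^ 2) / (1 + v' ^ 2 + w' ^ 2)) := by
          ring
      _ = 80 * Real.sqrt S * (1 + δ) * ((1 + u' ^ 2 + w' ^ 2) / (1 + v' ^ 2 + w' ^ 2)) := by
          rw [hδS]
      _ = (80 * Real.sqrt S * ((1 + u' ^ 2 + w' ^ 2) / (1 + v' ^ 2 + w' ^ 2))) * (1 + δ) := by
          ring
      _ ≤ (80 * Real.sqrt S * ((1 + u' ^ 2 + w' ^ 2) / (1 + v' ^ 2 + w' ^ 2))) *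
            (2 * Real.sqrt (1 + S)) := by
          refine mul_le_mul_of_nonneg_left step ?_
          have := Real.sqrt_nonneg S
          positivity
      _ = 160 * ((1 + u' ^ 2 + w' ^ 2) / (1 + v' ^ 2 + w' ^ 2)) * Real.sqrt S *
            Real.sqrt (1 + S) := by
          ring
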